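/- Let C ⊆ ℝ² be a convex set with nonempty interior and let p ∈ C be a boundary point of C (i.e. p ∈ C but p is not in the interior of C). Then σ(I(C,p)) + σ(E(C,p)) = π, where σ denotes the 1-dimensional Hausdorff measure on the unit circle. (That is, in the plane the internal and external angles at a boundary point of a convex set always sum to π.) -/

import Mathlib

open MeasureTheory RealInnerProductSpace

/-- The internal angle set of a convex set `C ⊆ ℝ²` at a point `p`. -/
def internalAngleSet (C : Set (EuclideanSpace ℝ (Fin 2)))
    (p : EuclideanSpace ℝ (Fin 2)) : Set (EuclideanSpace ℝ (Fin 2)) :=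
  {u | ‖u‖ = 1 ∧ ∃ t : ℝ, 0 < t ∧ p + t • u ∈ C}

/-- The external angle set of a convex set `C ⊆ ℝ²` at a point `p`. -/
def externalAngleSet (C : Set (EuclideanSpace ℝ (Fin 2)))
    (p : EuclideanSpace ℝ (Fin 2)) : Set (EuclideanSpace ℝ (Fin 2)) :=
  {u | ‖u‖ = 1 ∧ ∀ x ∈ C, ⟪u, x - p⟫ ≤ 0}

open Real Set

noncomputable def circ (θ : ℝ) : EuclideanSpace ℝ (Fin 2) :=
  (WithLp.equiv 2 (Fin 2 → ℝ)).symm ![Real.cos θ, Real.sin θ]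

lemma circ_inner (θ φ : ℝ) : ⟪circ θ, circ φ⟫ = Real.cos (θ - φ) := by
  simp only [circ, PiLp.inner_apply, Fin.sum_univ_two, RCLike.inner_apply, starRingEnd_apply,
    star_trivial]
  simp [Real.cos_sub, circ]
  ring

lemma circ_norm (θ : ℝ) : ‖circ θ‖ = 1 := by
  have h : ‖circ θ‖ ^ 2 = 1 := by
    rw [← real_inner_self_eq_norm_sq, circ_inner]; simp
  nlinarith [norm_nonneg (circ θ)]

lemma circ_dist (θ φ : ℝ) : dist (circ θ) (circ φ) = Real.sqrt (2 - 2 * Real.cos (θ - φ)) := by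
  rw [dist_eq_norm, ← Real.sqrt_sq (norm_nonneg _), ← real_inner_self_eq_norm_sq]
  congr 1
  rw [inner_sub_sub_self, circ_inner, circ_inner, circ_inner, real_inner_comm, circ_inner]
  rw [show φ - θ = -(θ - φ) by ring, Real.cos_neg]
  simp; ring

lemma circ_lipschitz : LipschitzWith 1 circ := by
  apply LipschitzWith.of_dist_le_mul
  intro θ φ
  rw [circ_dist, NNReal.coe_one, one_mul, Real.dist_eq]
  rw [show (2 : ℝ) - 2 * Real.cos (θ - φ) = 2 * (1 - Real.cos (θ - φ)) by ring]
  calc Real.sqrt (2 * (1 - Real.cos (θ - φ))) ≤ Real.sqrt ((θ - φ)^2) := by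
        apply Real.sqrt_le_sqrt
        nlinarith [Real.one_sub_sq_div_two_le_cos (x := θ - φ)]
    _ = |θ - φ| := Real.sqrt_sq_eq_abs _

lemma circ_dist_eq (θ φ : ℝ) (h : |θ - φ| ≤ 2 * Real.pi) :
    dist (circ θ) (circ φ) = 2 * Real.sin (|θ - φ| / 2) := by
  rw [circ_dist, ← Real.cos_abs (θ - φ)]
  rw [Real.sin_half_eq_sqrt (abs_nonneg _) h]
  rw [show (2 : ℝ) - 2 * Real.cos |θ - φ| = 4 * ((1 - Real.cos |θ - φ|) / 2) by ring]
  rw [Real.sqrt_mul (by norm_num)]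
  rw [show (4:ℝ) = 2^2 by norm_num, Real.sqrt_sq (by norm_num : (0:ℝ) ≤ 2)]

lemma circ_injOn {a b : ℝ} (h : b - a < 2 * Real.pi) : Set.InjOn circ (Set.Icc a b) := by
  intro θ hθ φ hφ he
  have h1 : ⟪circ θ, circ φ⟫ = 1 := by rw [he, circ_inner]; simp
  rw [circ_inner] at h1
  simp only [Set.mem_Icc] at hθ hφ
  have h2 : θ - φ = 0 := by
    rw [Real.cos_eq_one_iff_of_lt_of_lt (by linarith [hθ.1, hθ.2, hφ.1, hφ.2])
      (by linarith [hθ.1, hθ.2, hφ.1, hφ.2])] at h1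
    exact h1
  linarith

lemma circ_periodic (θ : ℝ) (k : ℤ) : circ (θ + 2 * Real.pi * k) = circ θ := by
  unfold circ
  congr 1
  rw [show θ + 2 * Real.pi * k = θ + k * (2 * Real.pi) by ring]
  rw [Real.cos_add_int_mul_two_pi, Real.sin_add_int_mul_two_pi]

lemma circ_surj (u : EuclideanSpace ℝ (Fin 2)) (hu : ‖u‖ = 1) : ∃ θ, circ θ = u := by
  have hsum : u 0 ^ 2 + u 1 ^ 2 = 1 := by
    have := hu
    rw [EuclideanSpace.norm_eq] at this
    rw [Fin.sum_univ_two] at this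
    have h2 : Real.sqrt (u 0 ^ 2 + u 1 ^ 2) = 1 := by
      convert this using 3 <;> rw [Real.norm_eq_abs, sq_abs]
    nlinarith [Real.sq_sqrt (by positivity : (0:ℝ) ≤ u 0 ^ 2 + u 1 ^ 2)]
  have h0 : -1 ≤ u 0 := by nlinarith
  have h1 : u 0 ≤ 1 := by nlinarith
  have hsin : Real.sin (Real.arccos (u 0)) = |u 1| := by
    rw [Real.sin_arccos]
    rw [show 1 - u 0 ^ 2 = u 1 ^ 2 by linarith]
    exact Real.sqrt_sq_eq_abs _
  rcases le_or_gt 0 (u 1) with hy | hy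
  · refine ⟨Real.arccos (u 0), ?_⟩
    apply (WithLp.equiv 2 (Fin 2 → ℝ)).injective
    funext i
    fin_cases i
    · show Real.cos (Real.arccos (u 0)) = u 0
      exact Real.cos_arccos h0 h1
    · show Real.sin (Real.arccos (u 0)) = u 1
      rw [hsin, abs_of_nonneg hy]
  · refine ⟨-Real.arccos (u 0), ?_⟩
    apply (WithLp.equiv 2 (Fin 2 → ℝ)).injective
    funext i
    fin_cases i
    · show Real.cos (-Real.arccos (u 0)) = u 0
      rw [Real.cos_neg]; exact Real.cos_arccos h0 h1
    · show Real.sin (-Real.arccos (u 0)) = u 1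
      rw [Real.sin_neg, hsin, abs_of_neg hy, neg_neg]

/-- every real can be shifted by a multiple of 2π into a given half-open window of width 2π -/
lemma shift_to_window (x a : ℝ) : ∃ k : ℤ, x + 2 * Real.pi * k ∈ Set.Ico a (a + 2 * Real.pi) := by
  refine ⟨⌈(a - x) / (2 * Real.pi)⌉, ?_⟩
  have hπ : (0:ℝ) < 2 * Real.pi := by positivity
  have h1 : (a - x) / (2 * Real.pi) ≤ ⌈(a - x) / (2 * Real.pi)⌉ := Int.le_ceil _
  have h2 : (⌈(a - x) / (2 * Real.pi)⌉ : ℝ) < (a - x) / (2 * Real.pi) + 1 := Int.ceil_lt_add_one _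
  constructor
  · rw [div_le_iff₀ hπ] at h1; linarith
  · have h3 : 2 * Real.pi * ⌈(a - x) / (2 * Real.pi)⌉ < 2 * Real.pi * ((a - x) / (2 * Real.pi) + 1) :=
      (mul_lt_mul_iff_right₀ hπ).2 h2
    rw [mul_add, mul_div_cancel₀ _ (ne_of_gt hπ), mul_one] at h3
    linarith

lemma chord_le_hausdorff {s : Set (EuclideanSpace ℝ (Fin 2))} (hs : IsPreconnected s)
    {x y : EuclideanSpace ℝ (Fin 2)} (hx : x ∈ s) (hy : y ∈ s) :
    ENNReal.ofReal (dist x y) ≤ μH[1] s := by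
  have hg : LipschitzWith 1 (dist x) := LipschitzWith.dist_right x
  have h1 : μH[1] (dist x '' s) ≤ μH[1] s := by
    have := hg.hausdorffMeasure_image_le (by norm_num : (0:ℝ) ≤ 1) s
    simpa using this
  have h2 : Set.Icc 0 (dist x y) ⊆ dist x '' s := by
    have hpre : IsPreconnected (dist x '' s) := hs.image _ hg.continuous.continuousOn
    have h0 : (0:ℝ) ∈ dist x '' s := ⟨x, hx, by simp⟩
    have hd : dist x y ∈ dist x '' s := ⟨y, hy, rfl⟩
    exact hpre.Icc_subset h0 hd
  calc ENNReal.ofReal (dist x y) = μH[1] (Set.Icc (0:ℝ) (dist x y)) := by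
        rw [MeasureTheory.hausdorffMeasure_real, Real.volume_Icc, sub_zero]
    _ ≤ μH[1] (dist x '' s) := measure_mono h2
    _ ≤ μH[1] s := h1

lemma arc_upper (s : Set ℝ) : μH[1] (circ '' s) ≤ μH[1] s := by
  have := circ_lipschitz.hausdorffMeasure_image_le (by norm_num : (0:ℝ) ≤ 1) s
  simpa using this

lemma arc_measure {a b : ℝ} (hab : a ≤ b) (hπ : b - a ≤ Real.pi) :
    μH[1] (circ '' Set.Icc a b) = ENNReal.ofReal (b - a) := by
  haveI : NullSingletonClass (μH[1] : Measure (EuclideanSpace ℝ (Fin 2))) :=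
    MeasureTheory.Measure.noAtoms_hausdorff (EuclideanSpace ℝ (Fin 2)) one_pos
  have hpi : (0:ℝ) < Real.pi := Real.pi_pos
  refine le_antisymm ?_ ?_
  · calc μH[1] (circ '' Set.Icc a b) ≤ μH[1] (Set.Icc a b) := arc_upper _
      _ = ENNReal.ofReal (b - a) := by
          rw [MeasureTheory.hausdorffMeasure_real, Real.volume_Icc]
  · set d := b - a with hd
    have hd0 : 0 ≤ d := by linarith
    rcases eq_or_lt_of_le hd0 with h0 | h0
    · rw [← h0]; simp
    have hinj : Set.InjOn circ (Set.Icc a b) := circ_injOn (by linarith)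
    -- key: for every positive N, the sum of chords is a lower bound
    have key : ∀ N : ℕ, 0 < N →
        ENNReal.ofReal ((N:ℝ) * (2 * Real.sin (d / (2*N)))) ≤ μH[1] (circ '' Set.Icc a b) := by
      intro N hN
      set Δ := d / N with hΔdef
      have hNR : (0:ℝ) < N := Nat.cast_pos.2 hN
      have hΔ0 : 0 < Δ := div_pos h0 hNR
      have hNΔ : (N:ℝ) * Δ = d := mul_div_cancel₀ _ (ne_of_gt hNR)
      have hΔπ : Δ ≤ Real.pi := by
        have hN1 : (1:ℝ) ≤ N := Nat.one_le_cast.2 hN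
        rw [hΔdef, div_le_iff₀ hNR]
        nlinarith [hπ, hpi]
      -- endpoints
      set e : ℕ → ℝ := fun i => a + i * Δ with he
      have hesub : ∀ i : ℕ, (i:ℝ) ≤ N → e i ∈ Set.Icc a b := by
        intro i hi
        constructor
        · simp only [he]; nlinarith
        · simp only [he]; nlinarith
      have hestep : ∀ i : ℕ, e i < e (i+1) := by
        intro i; simp only [he, Nat.cast_add, Nat.cast_one]; nlinarith
      set F : ℕ → Set (EuclideanSpace ℝ (Fin 2)) := fun i => circ '' Set.Ioo (e i) (e (i+1))
        with hF
      have hIccsub : ∀ i : ℕ, i < N → Set.Icc (e i) (e (i+1)) ⊆ Set.Icc a b := by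
        intro i hi
        apply Set.Icc_subset_Icc
        · exact (hesub i (by exact_mod_cast le_of_lt hi)).1
        · exact (hesub (i+1) (by exact_mod_cast hi)).2
      have hFeq : ∀ i : ℕ, i < N →
          F i = (circ '' Set.Icc (e i) (e (i+1))) \ {circ (e i), circ (e (i+1))} := by
        intro i hi
        ext z
        constructor
        · rintro ⟨θ, hθ, rfl⟩
          refine ⟨⟨θ, Set.Ioo_subset_Icc_self hθ, rfl⟩, ?_⟩
          simp only [Set.mem_insert_iff, Set.mem_singleton_iff]
          push_neg
          constructor
          · intro hc
            have := hinj (hIccsub i hi (Set.Ioo_subset_Icc_self hθ))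
              (hIccsub i hi (Set.left_mem_Icc.2 (le_of_lt (hestep i)))) hc
            exact absurd this (ne_of_gt hθ.1)
          · intro hc
            have := hinj (hIccsub i hi (Set.Ioo_subset_Icc_self hθ))
              (hIccsub i hi (Set.right_mem_Icc.2 (le_of_lt (hestep i)))) hc
            exact absurd this (ne_of_lt hθ.2)
        · rintro ⟨⟨θ, hθ, rfl⟩, hz⟩
          simp only [Set.mem_insert_iff, Set.mem_singleton_iff] at hz
          push_neg at hz
          refine ⟨θ, ⟨?_, ?_⟩, rfl⟩
          · rcases lt_or_eq_of_le hθ.1 with h | h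
            · exact h
            · exact absurd (h ▸ rfl) hz.1
          · rcases lt_or_eq_of_le hθ.2 with h | h
            · exact h
            · exact absurd (h ▸ rfl) hz.2
      have hmeas : ∀ i : ℕ, i < N → MeasurableSet (F i) := by
        intro i hi
        rw [hFeq i hi]
        refine MeasurableSet.diff ?_ ?_
        · exact (isCompact_Icc.image circ_lipschitz.continuous).measurableSet
        · exact ((Set.finite_singleton _).insert _).measurableSet
      have hdisj : (↑(Finset.range N) : Set ℕ).PairwiseDisjoint F := by
        intro i hi j hj hij
        simp only [Finset.coe_range, Set.mem_Iio] at hi hj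
        refine Set.disjoint_left.2 ?_
        rintro z ⟨θ₁, hθ₁, rfl⟩ ⟨θ₂, hθ₂, hz⟩
        have heq : θ₂ = θ₁ := hinj (hIccsub j hj (Set.Ioo_subset_Icc_self hθ₂))
          (hIccsub i hi (Set.Ioo_subset_Icc_self hθ₁)) hz
        subst heq
        -- θ₂ in both Ioo (e i) (e (i+1)) and Ioo (e j) (e (j+1)) with i ≠ j
        have hmono : ∀ k l : ℕ, k ≤ l → e k ≤ e l := by
          intro k l hkl
          simp only [he]
          have : (k:ℝ) ≤ l := by exact_mod_cast hkl
          nlinarith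
        rcases lt_or_gt_of_ne hij with h | h
        · have : e (i+1) ≤ e j := hmono _ _ h
          linarith [hθ₁.2, hθ₂.1]
        · have : e (j+1) ≤ e i := hmono _ _ h
          linarith [hθ₁.1, hθ₂.2]
      have hchord : ∀ i : ℕ, i < N →
          ENNReal.ofReal (2 * Real.sin (Δ / 2)) ≤ μH[1] (F i) := by
        intro i hi
        have hconn : IsPreconnected (circ '' Set.Icc (e i) (e (i+1))) :=
          (isPreconnected_Icc).image _ circ_lipschitz.continuous.continuousOn
        have hch : ENNReal.ofReal (dist (circ (e i)) (circ (e (i+1))))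
            ≤ μH[1] (circ '' Set.Icc (e i) (e (i+1))) :=
          chord_le_hausdorff hconn
            ⟨e i, Set.left_mem_Icc.2 (le_of_lt (hestep i)), rfl⟩
            ⟨e (i+1), Set.right_mem_Icc.2 (le_of_lt (hestep i)), rfl⟩
        have hdistval : dist (circ (e i)) (circ (e (i+1))) = 2 * Real.sin (Δ / 2) := by
          have habs : |e i - e (i+1)| = Δ := by
            rw [abs_sub_comm]
            rw [abs_of_pos (by linarith [hestep i])]
            simp only [he, Nat.cast_add, Nat.cast_one]; ring
          rw [circ_dist_eq _ _ (by rw [habs]; linarith), habs]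
        have hsplit : μH[1] (circ '' Set.Icc (e i) (e (i+1))) ≤ μH[1] (F i) := by
          have hsub : circ '' Set.Icc (e i) (e (i+1))
              ⊆ F i ∪ {circ (e i), circ (e (i+1))} := by
            rw [hFeq i hi]
            intro z hz
            by_cases h : z ∈ ({circ (e i), circ (e (i+1))} : Set _)
            · exact Or.inr h
            · exact Or.inl ⟨hz, h⟩
          calc μH[1] (circ '' Set.Icc (e i) (e (i+1)))
              ≤ μH[1] (F i) + μH[1] ({circ (e i), circ (e (i+1))} : Set _) :=
                le_trans (measure_mono hsub) (measure_union_le _ _)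
            _ = μH[1] (F i) := by
                rw [((Set.finite_singleton _).insert _).measure_zero, add_zero]
        rw [← hdistval]
        exact le_trans hch hsplit
      -- sum up
      have hsum : ∑ i ∈ Finset.range N, μH[1] (F i) ≤ μH[1] (circ '' Set.Icc a b) := by
        rw [← measure_biUnion_finset hdisj (fun i hi => hmeas i (Finset.mem_range.1 hi))]
        apply measure_mono
        apply Set.iUnion₂_subset
        intro i hi
        apply Set.image_mono
        exact Set.Ioo_subset_Icc_self.trans (hIccsub i (Finset.mem_range.1 hi))
      calc ENNReal.ofReal ((N:ℝ) * (2 * Real.sin (d / (2*N))))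
          = ∑ _i ∈ Finset.range N, ENNReal.ofReal (2 * Real.sin (Δ / 2)) := by
            rw [Finset.sum_const, Finset.card_range, nsmul_eq_mul,
              ← ENNReal.ofReal_natCast, ← ENNReal.ofReal_mul (Nat.cast_nonneg N)]
            congr 2
            rw [hΔdef]; ring_nf
        _ ≤ ∑ i ∈ Finset.range N, μH[1] (F i) :=
            Finset.sum_le_sum (fun i hi => hchord i (Finset.mem_range.1 hi))
        _ ≤ μH[1] (circ '' Set.Icc a b) := hsum
    -- epsilon argument
    apply ENNReal.le_of_forall_pos_le_add
    intro ε hε _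
    have hεR : (0:ℝ) < ε := hε
    obtain ⟨n, hn⟩ := exists_nat_gt (max (d ^ 3 / (16 * ε)) 2)
    have hn2 : (2:ℝ) < n := lt_of_le_of_lt (le_max_right _ _) hn
    have hnpos : 0 < n := by exact_mod_cast lt_trans (by norm_num : (0:ℝ) < 2) hn2
    have hnR : (0:ℝ) < n := by exact_mod_cast hnpos
    have hkey := key n hnpos
    set x := d / (2 * n) with hx
    have hx0 : 0 < x := by positivity
    have hx1 : x ≤ 1 := by
      rw [hx, div_le_one (by positivity)]
      nlinarith [Real.pi_lt_d2]
    have hsin : x - x ^ 3 / 4 < Real.sin x := by have := Real.sin_gt_sub_cube hx0; nlinarith [pow_pos hx0 3]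
    have hnd : d ^ 3 / (16 * ε) < n := lt_of_le_of_lt (le_max_left _ _) hn
    have hlow : d - ε ≤ (n:ℝ) * (2 * Real.sin x) := by
      have h1 : (n:ℝ) * (2 * (x - x ^ 3 / 4)) ≤ (n:ℝ) * (2 * Real.sin x) := by
        apply mul_le_mul_of_nonneg_left _ (le_of_lt hnR)
        nlinarith
      have h2 : (n:ℝ) * (2 * (x - x ^ 3 / 4)) = d - d ^ 3 / (16 * n ^ 2) := by
        rw [hx]; field_simp; ring
      have h3 : d ^ 3 / (16 * (n:ℝ) ^ 2) ≤ d ^ 3 / (16 * n) := by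
        apply div_le_div_of_nonneg_left (by positivity) (by positivity)
        nlinarith
      have h4 : d ^ 3 / (16 * (n:ℝ)) < ε := by
        rw [div_lt_iff₀ (by positivity)]
        rw [div_lt_iff₀ (by positivity)] at hnd
        nlinarith
      linarith
    calc ENNReal.ofReal d ≤ ENNReal.ofReal ((n:ℝ) * (2 * Real.sin x) + ε) := by
          apply ENNReal.ofReal_le_ofReal; linarith
      _ ≤ ENNReal.ofReal ((n:ℝ) * (2 * Real.sin x)) + ENNReal.ofReal ε :=
          ENNReal.ofReal_add_le
      _ ≤ μH[1] (circ '' Set.Icc a b) + ε := by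
          rw [ENNReal.ofReal_coe_nnreal]
          exact add_le_add hkey le_rfl

lemma arc_measure' {a b : ℝ} (hab : a ≤ b) (hπ : b - a ≤ Real.pi) {S : Set ℝ}
    (h1 : Set.Ioo a b ⊆ S) (h2 : S ⊆ Set.Icc a b) :
    μH[1] (circ '' S) = ENNReal.ofReal (b - a) := by
  haveI : NullSingletonClass (μH[1] : Measure (EuclideanSpace ℝ (Fin 2))) :=
    MeasureTheory.Measure.noAtoms_hausdorff (EuclideanSpace ℝ (Fin 2)) one_pos
  refine le_antisymm ?_ ?_
  · rw [← arc_measure hab hπ]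
    exact measure_mono (Set.image_mono h2)
  · rw [← arc_measure hab hπ]
    have hsub : circ '' Set.Icc a b ⊆ (circ '' S) ∪ {circ a, circ b} := by
      rintro z ⟨θ, hθ, rfl⟩
      rcases eq_or_lt_of_le hθ.1 with h | h
      · exact Or.inr (Or.inl (by rw [← h]))
      rcases eq_or_lt_of_le hθ.2 with h' | h'
      · exact Or.inr (Or.inr (by rw [h']; rfl))
      · exact Or.inl ⟨θ, h1 ⟨h, h'⟩, rfl⟩
    calc μH[1] (circ '' Set.Icc a b)
        ≤ μH[1] (circ '' S) + μH[1] ({circ a, circ b} : Set _) :=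
          le_trans (measure_mono hsub) (measure_union_le _ _)
      _ = μH[1] (circ '' S) := by
          rw [((Set.finite_singleton _).insert _).measure_zero, add_zero]

lemma window_shift {ψ x : ℝ} (h : Real.cos (x - ψ) ≤ 0) :
    ∃ k : ℤ, x + 2*Real.pi*k ∈ Set.Icc (ψ+Real.pi/2) (ψ+3*Real.pi/2) := by
  obtain ⟨k, hk⟩ := shift_to_window x (ψ + Real.pi/2)
  refine ⟨k, hk.1, ?_⟩
  by_contra hcon
  push_neg at hcon
  have hcos : Real.cos (x + 2*Real.pi*k - ψ) = Real.cos (x - ψ) := by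
    rw [show x + 2*Real.pi*k - ψ = (x - ψ) + k * (2 * Real.pi) by ring,
      Real.cos_add_int_mul_two_pi]
  have hpos : 0 < Real.cos (x + 2*Real.pi*k - ψ) := by
    rw [show x + 2*Real.pi*k - ψ = (x + 2*Real.pi*k - ψ - 2*Real.pi) + 1 * (2*Real.pi) by ring,
      show ((1:ℝ)) = ((1:ℤ):ℝ) by norm_num, Real.cos_add_int_mul_two_pi]
    apply Real.cos_pos_of_mem_Ioo
    constructor
    · simp only [Set.mem_Ico] at hk; linarith [hcon]
    · simp only [Set.mem_Ico] at hk; linarith [hk.2]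
  rw [hcos] at hpos; linarith

lemma window_shift' {ψ x : ℝ} (h : Real.cos (x - ψ) < 0) :
    ∃ k : ℤ, x + 2*Real.pi*k ∈ Set.Ioo (ψ+Real.pi/2) (ψ+3*Real.pi/2) := by
  obtain ⟨k, hk⟩ := window_shift (le_of_lt h)
  refine ⟨k, ?_⟩
  have hcos : Real.cos (x + 2*Real.pi*k - ψ) = Real.cos (x - ψ) := by
    rw [show x + 2*Real.pi*k - ψ = (x - ψ) + k * (2 * Real.pi) by ring,
      Real.cos_add_int_mul_two_pi]
  simp only [Set.mem_Icc] at hk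
  constructor
  · rcases eq_or_lt_of_le hk.1 with he | he
    · exfalso
      have : Real.cos (x + 2*Real.pi*k - ψ) = 0 := by
        rw [show x + 2*Real.pi*k - ψ = Real.pi/2 by linarith]
        exact Real.cos_pi_div_two
      rw [hcos] at this; linarith
    · exact he
  · rcases eq_or_lt_of_le hk.2 with he | he
    · exfalso
      have : Real.cos (x + 2*Real.pi*k - ψ) = 0 := by
        rw [show x + 2*Real.pi*k - ψ = Real.pi + Real.pi/2 by linarith]
        rw [Real.cos_add_pi_div_two, Real.sin_pi]
        ring
      rw [hcos] at this; linarith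
    · exact he

lemma cone_mem {C : Set (EuclideanSpace ℝ (Fin 2))} (hC : Convex ℝ C)
    {p : EuclideanSpace ℝ (Fin 2)} {φ₁ φ φ₂ : ℝ} (h1 : φ₁ ≤ φ) (h2 : φ ≤ φ₂)
    (hlt : φ₂ - φ₁ < Real.pi)
    (m1 : ∃ t : ℝ, 0 < t ∧ p + t • circ φ₁ ∈ C) (m2 : ∃ t : ℝ, 0 < t ∧ p + t • circ φ₂ ∈ C) :
    ∃ t : ℝ, 0 < t ∧ p + t • circ φ ∈ C := by
  rcases eq_or_lt_of_le (le_trans h1 h2) with heq | hneq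
  · -- φ₁ = φ₂, hence φ = φ₁
    have : φ = φ₁ := le_antisymm (heq ▸ h2) h1
    rw [this]; exact m1
  obtain ⟨t₁, ht₁, hx₁⟩ := m1
  obtain ⟨t₂, ht₂, hx₂⟩ := m2
  set s₁ := Real.sin (φ₂ - φ) with hs₁def
  set s₂ := Real.sin (φ - φ₁) with hs₂def
  set D := Real.sin (φ₂ - φ₁) with hDdef
  have hD : 0 < D := Real.sin_pos_of_pos_of_lt_pi (by linarith) hlt
  have hs₁ : 0 ≤ s₁ := Real.sin_nonneg_of_nonneg_of_le_pi (by linarith) (by linarith)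
  have hs₂ : 0 ≤ s₂ := Real.sin_nonneg_of_nonneg_of_le_pi (by linarith) (by linarith)
  have hcomb : D • circ φ = s₁ • circ φ₁ + s₂ • circ φ₂ := by
    apply (WithLp.equiv 2 (Fin 2 → ℝ)).injective
    funext i
    fin_cases i
    · show D * Real.cos φ = s₁ * Real.cos φ₁ + s₂ * Real.cos φ₂
      rw [hs₁def, hs₂def, hDdef, Real.sin_sub, Real.sin_sub, Real.sin_sub]
      ring
    · show D * Real.sin φ = s₁ * Real.sin φ₁ + s₂ * Real.sin φ₂
      rw [hs₁def, hs₂def, hDdef, Real.sin_sub, Real.sin_sub, Real.sin_sub]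
      ring
  have hssum : 0 < s₁ + s₂ := by
    rcases lt_or_eq_of_le hs₁ with h | h
    · linarith
    rcases lt_or_eq_of_le hs₂ with h' | h'
    · linarith
    exfalso
    have e1 : φ₂ - φ = 0 := by
      rw [← Real.sin_eq_zero_iff_of_lt_of_lt (by linarith [Real.pi_pos]) (by linarith)]
      exact h.symm
    have e2 : φ - φ₁ = 0 := by
      rw [← Real.sin_eq_zero_iff_of_lt_of_lt (by linarith [Real.pi_pos]) (by linarith)]
      exact h'.symm
    linarith
  set a := s₁ / t₁ with hadef
  set b := s₂ / t₂ with hbdef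
  have ha : 0 ≤ a := div_nonneg hs₁ (le_of_lt ht₁)
  have hb : 0 ≤ b := div_nonneg hs₂ (le_of_lt ht₂)
  have hab : 0 < a + b := by
    rcases lt_or_eq_of_le hs₁ with h | h
    · have : 0 < a := div_pos h ht₁; linarith
    · have : 0 < s₂ := by rw [← h] at hssum; simpa using hssum
      have : 0 < b := div_pos this ht₂; linarith
  set c := (a + b)⁻¹ with hcdef
  have hc : (a + b) * c = 1 := mul_inv_cancel₀ (ne_of_gt hab)
  have has : a * t₁ = s₁ := div_mul_cancel₀ _ (ne_of_gt ht₁)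
  have hbs : b * t₂ = s₂ := div_mul_cancel₀ _ (ne_of_gt ht₂)
  refine ⟨D * c, mul_pos hD (inv_pos.2 hab), ?_⟩
  have hmem := hC hx₁ hx₂ (mul_nonneg ha (le_of_lt (inv_pos.2 hab)))
    (mul_nonneg hb (le_of_lt (inv_pos.2 hab)))
    (by rw [← add_mul]; exact hc)
  convert hmem using 1
  apply (WithLp.equiv 2 (Fin 2 → ℝ)).injective
  funext i
  have hci : D * circ φ i = s₁ * circ φ₁ i + s₂ * circ φ₂ i := by
    exact congrFun (congrArg (WithLp.equiv 2 (Fin 2 → ℝ)) hcomb) i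
  show p i + D * c * circ φ i
      = (a * c) * (p i + t₁ * circ φ₁ i) + (b * c) * (p i + t₂ * circ φ₂ i)
  linear_combination c * hci - (p i) * hc - (c * circ φ₁ i) * has - (c * circ φ₂ i) * hbs

set_option maxHeartbeats 2000000 in
theorem main_thm (C : Set (EuclideanSpace ℝ (Fin 2)))
    (hC : Convex ℝ C) (hint : (interior C).Nonempty)
    (p : EuclideanSpace ℝ (Fin 2)) (hp : p ∈ C) (hbd : p ∉ interior C) :
    μH[1] (internalAngleSet C p) + μH[1] (externalAngleSet C p)
      = ENNReal.ofReal Real.pi := by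
  have hpi : (0:ℝ) < Real.pi := Real.pi_pos
  obtain ⟨w, hw⟩ := hint
  -- supporting functional
  obtain ⟨f, hf⟩ := geometric_hahn_banach_open_point (hC.interior) isOpen_interior hbd
  have hfC : ∀ x ∈ C, f x ≤ f p := by
    intro x hx
    have hseg : ∀ t ∈ Set.Ioc (0:ℝ) 1, f x + t * (f w - f x) < f p := by
      intro t ht
      have hmem := hC.add_smul_mem_interior hx (y := w - x) (by simpa using hw) ht
      have := hf _ hmem
      rw [f.map_add, f.map_smul, smul_eq_mul, f.map_sub] at this
      linarith
    have htend : Filter.Tendsto (fun t : ℝ => f x + t * (f w - f x))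
        (nhdsWithin 0 (Set.Ioi 0)) (nhds (f x)) := by
      have hcont : Continuous (fun t : ℝ => f x + t * (f w - f x)) := by continuity
      have := hcont.tendsto 0
      simp only [zero_mul, add_zero] at this
      exact this.mono_left nhdsWithin_le_nhds
    refine le_of_tendsto htend ?_
    filter_upwards [Ioc_mem_nhdsGT_of_mem ⟨le_refl (0:ℝ), zero_lt_one⟩] with t ht
    exact le_of_lt (hseg t ht)
  -- unit normal
  set v := (InnerProductSpace.toDual ℝ (EuclideanSpace ℝ (Fin 2))).symm f with hvdef
  have hvinner : ∀ y, (inner ℝ v y : ℝ) = f y := fun y => InnerProductSpace.toDual_symm_apply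
  have hfw : f w < f p := hf w hw
  have hv0 : v ≠ 0 := by
    intro h
    have h1 : (inner ℝ v w : ℝ) = 0 := by rw [h, inner_zero_left]
    have h2 : (inner ℝ v p : ℝ) = 0 := by rw [h, inner_zero_left]
    rw [hvinner] at h1 h2
    linarith
  set n := ‖v‖⁻¹ • v with hndef
  have hn1 : ‖n‖ = 1 := norm_smul_inv_norm hv0
  have hvpos : (0:ℝ) < ‖v‖⁻¹ := inv_pos.2 (norm_pos_iff.2 hv0)
  have hnC : ∀ x ∈ C, (inner ℝ n (x - p) : ℝ) ≤ 0 := by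
    intro x hx
    rw [hndef, real_inner_smul_left, inner_sub_right, hvinner, hvinner]
    have := hfC x hx
    nlinarith
  have hnint : ∀ x ∈ interior C, (inner ℝ n (x - p) : ℝ) < 0 := by
    intro x hx
    rw [hndef, real_inner_smul_left, inner_sub_right, hvinner, hvinner]
    have h2 := hf x hx
    nlinarith
  obtain ⟨ψ, hψ⟩ := circ_surj n hn1
  -- the distinguished interior direction
  have hwp : w - p ≠ 0 := by
    intro h
    rw [sub_eq_zero] at h
    exact hbd (h ▸ hw)
  set wd := ‖w - p‖⁻¹ • (w - p) with hwddef
  have hwd1 : ‖wd‖ = 1 := norm_smul_inv_norm hwp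
  have hwppos : (0:ℝ) < ‖w - p‖ := norm_pos_iff.2 hwp
  have hwdI : ∃ t : ℝ, 0 < t ∧ p + t • wd ∈ C := by
    refine ⟨‖w - p‖, hwppos, ?_⟩
    rw [hwddef, smul_inv_smul₀ (ne_of_gt hwppos)]
    simpa using interior_subset hw
  have hwdn : (inner ℝ n wd : ℝ) < 0 := by
    rw [hwddef, real_inner_smul_right]
    have h1 : (0:ℝ) < ‖w - p‖⁻¹ := inv_pos.2 hwppos
    have h2 := hnint w hw
    nlinarith
  obtain ⟨θ₁, hθ₁⟩ := circ_surj wd hwd1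
  have hcosθ₁ : Real.cos (θ₁ - ψ) < 0 := by
    have : (inner ℝ (circ ψ) (circ θ₁) : ℝ) = Real.cos (ψ - θ₁) := circ_inner _ _
    rw [hψ, hθ₁] at this
    rw [show θ₁ - ψ = -(ψ - θ₁) by ring, Real.cos_neg, ← this]
    exact hwdn
  obtain ⟨k₁, hk₁⟩ := window_shift' hcosθ₁
  set θs := θ₁ + 2*Real.pi*k₁ with hθsdef
  have hθs : circ θs = wd := by rw [hθsdef, circ_periodic]; exact hθ₁
  -- the set of internal angles in the window
  set T : Set ℝ := {θ | θ ∈ Set.Icc (ψ+Real.pi/2) (ψ+3*Real.pi/2) ∧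
    ∃ t : ℝ, 0 < t ∧ p + t • circ θ ∈ C} with hTdef
  have hθsT : θs ∈ T := ⟨Set.Ioo_subset_Icc_self hk₁, by rw [hθs]; exact hwdI⟩
  have hTne : T.Nonempty := ⟨θs, hθsT⟩
  have hTbdd_below : BddBelow T := ⟨ψ+Real.pi/2, fun θ hθ => hθ.1.1⟩
  have hTbdd_above : BddAbove T := ⟨ψ+3*Real.pi/2, fun θ hθ => hθ.1.2⟩
  -- order connectedness
  have hOC : ∀ θa ∈ T, ∀ θb ∈ T, ∀ θ, θa ≤ θ → θ ≤ θb → θ ∈ T := by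
    intro θa ha θb hb θ h1 h2
    have hwin : θ ∈ Set.Icc (ψ+Real.pi/2) (ψ+3*Real.pi/2) :=
      ⟨le_trans ha.1.1 h1, le_trans h2 hb.1.2⟩
    refine ⟨hwin, ?_⟩
    rcases le_total θ θs with hle | hle
    · exact cone_mem hC h1 hle (by
        have := ha.1.1
        have := hk₁.2
        linarith) ha.2 (by rw [hθs]; exact hwdI)
    · exact cone_mem hC hle h2 (by
        have := hb.1.2
        have := hk₁.1
        linarith) (by rw [hθs]; exact hwdI) hb.2
  set α := sInf T with hαdef
  set β := sSup T with hβdef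
  have hαwin : ψ+Real.pi/2 ≤ α := le_csInf hTne (fun θ hθ => hθ.1.1)
  have hβwin : β ≤ ψ+3*Real.pi/2 := csSup_le hTne (fun θ hθ => hθ.1.2)
  have hαθs : α ≤ θs := csInf_le hTbdd_below hθsT
  have hθsβ : θs ≤ β := le_csSup hTbdd_above hθsT
  have hαβ : α ≤ β := le_trans hαθs hθsβ
  have hβαπ : β - α ≤ Real.pi := by linarith
  have hTsubIcc : T ⊆ Set.Icc α β := fun θ hθ =>
    ⟨csInf_le hTbdd_below hθ, le_csSup hTbdd_above hθ⟩
  have hIoosubT : Set.Ioo α β ⊆ T := by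
    intro θ hθ
    obtain ⟨θa, haT, ha⟩ := exists_lt_of_csInf_lt hTne hθ.1
    obtain ⟨θb, hbT, hb⟩ := exists_lt_of_lt_csSup hTne hθ.2
    exact hOC θa haT θb hbT θ (le_of_lt ha) (le_of_lt hb)
  -- identify internal angle set
  have hIhalf : ∀ u ∈ internalAngleSet C p, (inner ℝ n u : ℝ) ≤ 0 := by
    rintro u ⟨hu1, t, ht, hmem⟩
    have := hnC _ hmem
    rw [add_sub_cancel_left, real_inner_smul_right] at this
    nlinarith
  have hIeq : internalAngleSet C p = circ '' T := by
    ext u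
    constructor
    · intro hu
      obtain ⟨θ₀, hθ₀⟩ := circ_surj u hu.1
      have hcos : Real.cos (θ₀ - ψ) ≤ 0 := by
        have : (inner ℝ (circ ψ) (circ θ₀) : ℝ) = Real.cos (ψ - θ₀) := circ_inner _ _
        rw [hψ, hθ₀] at this
        rw [show θ₀ - ψ = -(ψ - θ₀) by ring, Real.cos_neg, ← this]
        exact hIhalf u hu
      obtain ⟨k, hk⟩ := window_shift hcos
      refine ⟨θ₀ + 2*Real.pi*k, ⟨hk, ?_⟩, by rw [circ_periodic]; exact hθ₀⟩
      rw [circ_periodic, hθ₀]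
      exact hu.2
    · rintro ⟨θ, hθ, rfl⟩
      exact ⟨circ_norm θ, hθ.2⟩
  have hImeas : μH[1] (internalAngleSet C p) = ENNReal.ofReal (β - α) := by
    rw [hIeq]
    exact arc_measure' hαβ hβαπ hIoosubT hTsubIcc
  -- identify external angle set
  have hEeq : externalAngleSet C p
      = circ '' Set.Icc (β + Real.pi/2) (α + 3*Real.pi/2) := by
    ext u
    constructor
    · rintro ⟨hu1, huE⟩
      -- strict negativity against the interior direction
      obtain ⟨r, hr0, hball⟩ := Metric.isOpen_iff.1 isOpen_interior w hw
      have hxball : w + (r/2) • u ∈ Metric.ball w r := by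
        rw [Metric.mem_ball, dist_eq_norm, add_sub_cancel_left, norm_smul, hu1]
        simp only [Real.norm_eq_abs, abs_of_pos (by linarith : (0:ℝ) < r/2), mul_one]
        linarith
      have hxC : w + (r/2) • u ∈ C := interior_subset (hball hxball)
      have hust : (inner ℝ u (w - p) : ℝ) < 0 := by
        have := huE _ hxC
        rw [show w + (r/2) • u - p = (w - p) + (r/2) • u by abel,
          inner_add_right, real_inner_smul_right, real_inner_self_eq_norm_sq, hu1] at this
        nlinarith
      have hwdinner : (inner ℝ u (circ θs) : ℝ) < 0 := by
        rw [hθs, hwddef, real_inner_smul_right]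
        have h1 : (0:ℝ) < ‖w - p‖⁻¹ := inv_pos.2 hwppos
        nlinarith
      have hTle : ∀ θ ∈ T, (inner ℝ u (circ θ) : ℝ) ≤ 0 := by
        rintro θ ⟨_, t, ht, hmem⟩
        have := huE _ hmem
        rw [add_sub_cancel_left, real_inner_smul_right] at this
        nlinarith
      have hclosed : IsClosed {θ : ℝ | (inner ℝ u (circ θ) : ℝ) ≤ 0} := by
        have hcont : Continuous fun θ : ℝ => (inner ℝ u (circ θ) : ℝ) :=
          Continuous.inner continuous_const circ_lipschitz.continuous
        exact isClosed_le hcont continuous_const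
      have hclT : closure T ⊆ {θ : ℝ | (inner ℝ u (circ θ) : ℝ) ≤ 0} :=
        closure_minimal hTle hclosed
      have hα : (inner ℝ u (circ α) : ℝ) ≤ 0 := hclT (csInf_mem_closure hTne hTbdd_below)
      have hβ : (inner ℝ u (circ β) : ℝ) ≤ 0 := hclT (csSup_mem_closure hTne hTbdd_above)
      obtain ⟨φ₀, hφ₀⟩ := circ_surj u hu1
      have hcosθs : Real.cos (φ₀ - θs) < 0 := by
        rw [← circ_inner, hφ₀]
        exact hwdinner
      obtain ⟨k, hk⟩ := window_shift' hcosθs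
      set φ := φ₀ + 2*Real.pi*k with hφdef
      have hφu : circ φ = u := by rw [hφdef, circ_periodic]; exact hφ₀
      have hcosα : Real.cos (φ - α) ≤ 0 := by rw [← circ_inner, hφu]; exact hα
      have hcosβ : Real.cos (φ - β) ≤ 0 := by rw [← circ_inner, hφu]; exact hβ
      refine ⟨φ, ⟨?_, ?_⟩, hφu⟩
      · by_contra hcon
        push_neg at hcon
        have hpos : 0 < Real.cos (φ - β) := by
          apply Real.cos_pos_of_mem_Ioo
          constructor
          · have h1 : θs + Real.pi/2 < φ := hk.1
            linarith [hαθs]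
          · linarith
        linarith
      · by_contra hcon
        push_neg at hcon
        have hpos : 0 < Real.cos (φ - α) := by
          rw [show φ - α = (φ - α - 2*Real.pi) + 2*Real.pi by ring, Real.cos_add_two_pi]
          apply Real.cos_pos_of_mem_Ioo
          constructor
          · linarith
          · have h2 : φ < θs + 3*Real.pi/2 := hk.2
            linarith [hθsβ]
        linarith
    · rintro ⟨φ, hφ, rfl⟩
      refine ⟨circ_norm φ, ?_⟩
      intro x hx
      by_cases hxp : x = p
      · rw [hxp, sub_self, inner_zero_right]
      · have hxpne : x - p ≠ 0 := sub_ne_zero.2 hxp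
        have hxppos : (0:ℝ) < ‖x - p‖ := norm_pos_iff.2 hxpne
        have hudI : ‖x - p‖⁻¹ • (x - p) ∈ internalAngleSet C p := by
          refine ⟨norm_smul_inv_norm hxpne, ‖x - p‖, hxppos, ?_⟩
          rw [smul_inv_smul₀ (ne_of_gt hxppos)]
          have : p + (x - p) = x := by abel
          rw [this]; exact hx
        rw [hIeq] at hudI
        obtain ⟨θ, hθT, hθeq⟩ := hudI
        have hxpeq : x - p = ‖x - p‖ • circ θ := by
          rw [hθeq, smul_inv_smul₀ (ne_of_gt hxppos)]
        rw [hxpeq, real_inner_smul_right, circ_inner]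
        have hθαβ := hTsubIcc hθT
        have hcos : Real.cos (φ - θ) ≤ 0 := by
          apply Real.cos_nonpos_of_pi_div_two_le_of_le
          · linarith [hφ.1, hθαβ.2]
          · linarith [hφ.2, hθαβ.1]
        nlinarith
  have hEmeas : μH[1] (externalAngleSet C p)
      = ENNReal.ofReal (Real.pi - (β - α)) := by
    rw [hEeq, arc_measure (by linarith) (by linarith)]
    congr 1; ring
  rw [hImeas, hEmeas, ← ENNReal.ofReal_add (by linarith) (by linarith)]
  congr 1; ring


/-- For a planar convex set `C` with nonempty interior and a boundary point
`p ∈ C \ interior C`, the internal and external angles of `C` at `p` sum to `π`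
(as 1-dimensional Hausdorff measures on the unit circle). -/
theorem internal_add_external_angle_eq_pi (C : Set (EuclideanSpace ℝ (Fin 2)))
    (hC : Convex ℝ C) (hint : (interior C).Nonempty)
    (p : EuclideanSpace ℝ (Fin 2)) (hp : p ∈ C) (hbd : p ∉ interior C) :
    μH[1] (internalAngleSet C p) + μH[1] (externalAngleSet C p)
      = ENNReal.ofReal Real.pi := by
  exact main_thm C hC hint p hp hbd
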